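/- In the regularised RBM construction, the energy of any configuration of the form (v, -e), where -e is the all-(-1) hidden configuration and v ∈ {-1,1}^V is arbitrary, equals E_0 = -2A ∑_{α=1}^H (V - λ_α), independently of v. -/
import Mathlib


open Finset

/-- Energy of the regularised RBM with weights `W j α = 2 A v α j`, zero visible
biases and hidden biases `c α = 2 A (λ α - V)`. -/
noncomputable def raEnergy {V H : ℕ} (A : ℝ) (lam : Fin H → ℝ)
    (v : Fin H → Fin V → ℝ) (x : Fin V → ℝ) (h : Fin H → ℝ) : ℝ :=
  -(∑ j, ∑ α, x j * (2 * A * v α j) * h α)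
    - ∑ α, (2 * A * (lam α - (V : ℝ))) * h α

/-- Overlap `S α η = v^α · v^η`. -/
noncomputable def raOverlap {V H : ℕ} (v : Fin H → Fin V → ℝ) (α η : Fin H) : ℝ :=
  ∑ j, v α j * v η j

theorem regularised_plateau_energy
    (V H : ℕ) (A : ℝ) (hA : 0 < A) (lam : Fin H → ℝ)
    (v : Fin H → Fin V → ℝ)
    (hpm : ∀ η j, v η j = 1 ∨ v η j = -1)
    (hdist : Function.Injective v)
    (hneg : ∀ η, ∃ η', ∀ j, v η' j = -(v η j))
    (x : Fin V → ℝ) (hx : ∀ j, x j = 1 ∨ x j = -1) :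
    raEnergy A lam v x (fun _ => (-1 : ℝ))
      = -2 * A * ∑ α, ((V : ℝ) - lam α) := by
  classical
  -- the negation map
  choose σ hσ using hneg
  have hinv : Function.Involutive σ := by
    intro η
    apply hdist
    funext j
    rw [hσ, hσ]; ring
  have hcol : ∀ j, ∑ α, v α j = 0 := by
    intro j
    have h1 : ∑ α, v α j = ∑ α, v (σ α) j :=
      (Fintype.sum_equiv hinv.toPerm _ _ (fun α => rfl)).symm
    have h2 : ∑ α, v (σ α) j = -∑ α, v α j := by
      rw [← Finset.sum_neg_distrib]
      exact Finset.sum_congr rfl fun α _ => hσ α j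
    linarith [h1, h2]
  unfold raEnergy
  have hfirst : (∑ j, ∑ α, x j * (2 * A * v α j) * (-1 : ℝ)) = 0 := by
    apply Finset.sum_eq_zero
    intro j _
    have : (∑ α, x j * (2 * A * v α j) * (-1 : ℝ))
        = (x j * (2 * A) * (-1)) * ∑ α, v α j := by
      rw [Finset.mul_sum]
      exact Finset.sum_congr rfl fun α _ => by ring
    rw [this, hcol j, mul_zero]
  rw [hfirst, Finset.mul_sum]
  simp only [neg_zero, zero_sub, ← Finset.sum_neg_distrib]
  exact Finset.sum_congr rfl fun α _ => by ring
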